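/- Let ρ: W → GL(V) be a finite-dimensional irreducible representation of a group W over a field F, and let s₁, …, s_k ∈ W be such that each s_i acts on V as a generalized reflection with reflection vector α_i, and W is generated by {s₁, …, s_k}. Define a graph G on vertex set S = {1, …, k} with edges E = {{i, j} : s_i · α_j ≠ α_j}, and assume that for all i, j, s_i · α_j ≠ α_j if and only if s_j · α_i ≠ α_i. Then the graph G is connected. -/

import Mathlib

open Module ExteriorAlgebra

variable {F : Type*} [Field F] {V : Type*} [AddCommGroup V] [Module F V]
  {V₂ : Type*} [AddCommGroup V₂] [Module F V₂]

/-- A (generalized) reflection: a diagonalizable endomorphism `s` with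
`rank (s - id) = 1`. -/
def IsReflection (s : V →ₗ[F] V) : Prop :=
  (⨆ μ : F, Module.End.eigenspace s μ) = ⊤ ∧
    Module.finrank F (LinearMap.range (s - LinearMap.id)) = 1

theorem extPower_map_mem (d : ℕ) (f : V →ₗ[F] V₂) {x : ExteriorAlgebra F V}
    (hx : x ∈ ⋀[F]^d V) : ExteriorAlgebra.map f x ∈ ⋀[F]^d V₂ := by
  have h : Submodule.map (ExteriorAlgebra.map f).toLinearMap (⋀[F]^d V) ≤ ⋀[F]^d V₂ := by
    rw [exteriorPower, Submodule.map_pow, ι_range_map_map]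
    have h1 : Submodule.map (ι F (M := V₂)) (LinearMap.range f)
        ≤ LinearMap.range (ι F (M := V₂)) := by
      rintro - ⟨y, -, rfl⟩
      exact ⟨y, rfl⟩
    exact pow_le_pow_left' h1 d
  exact h ⟨x, hx, rfl⟩

/-- The linear map induced on `d`-th exterior powers by a linear map; for the inclusion
`H.subtype` of a subspace `H ⊆ V` this realizes `⋀^d H` as a subspace of `⋀^d V`
(via its range). -/
noncomputable def extMap (d : ℕ) (f : V →ₗ[F] V₂) : (⋀[F]^d V) →ₗ[F] (⋀[F]^d V₂) :=
  (ExteriorAlgebra.map f).toLinearMap.restrict (fun _ hx => extPower_map_mem d f hx)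

@[simp] theorem extMap_apply_coe (d : ℕ) (f : V →ₗ[F] V₂) (x : ⋀[F]^d V) :
    (extMap d f x : ExteriorAlgebra F V₂) = ExteriorAlgebra.map f x := rfl

variable {W : Type*} [Group W]

/-- The representation of `W` on the `d`-th exterior power `⋀^d V` induced by a
representation of `W` on `V`, given by `w · (v₁ ∧ ⋯ ∧ v_d) = (w·v₁) ∧ ⋯ ∧ (w·v_d)`. -/
noncomputable def extRep (ρ : Representation F W V) (d : ℕ) :
    Representation F W (⋀[F]^d V) where
  toFun w := extMap d (ρ w)
  map_one' := by
    apply LinearMap.ext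
    intro x
    apply Subtype.ext
    simp only [extMap_apply_coe, map_one]
    show (ExteriorAlgebra.map (LinearMap.id) : _) _ = _
    rw [ExteriorAlgebra.map_id]
    rfl
  map_mul' a b := by
    apply LinearMap.ext
    intro x
    apply Subtype.ext
    simp only [extMap_apply_coe, map_mul]
    show (ExteriorAlgebra.map (ρ a ∘ₗ ρ b) : _) _ = _
    rw [← ExteriorAlgebra.map_comp_map]
    rfl

/-- Irreducibility (simplicity) of a representation: the space is nonzero and the only
invariant subspaces are `⊥` and `⊤`. -/
def Representation.IsIrreducible' (ρ : Representation F W V) : Prop :=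
  Nontrivial V ∧
    ∀ U : Submodule F V, (∀ w : W, ∀ v ∈ U, ρ w v ∈ U) → U = ⊥ ∨ U = ⊤

/-- Isomorphism of two representations of `W`: an equivariant linear equivalence. -/
def Representation.Iso {F W : Type*} [CommSemiring F] [Monoid W]
    {V₁ V₂ : Type*} [AddCommMonoid V₁] [Module F V₁] [AddCommMonoid V₂] [Module F V₂]
    (ρ₁ : Representation F W V₁) (ρ₂ : Representation F W V₂) : Prop :=
  ∃ e : V₁ ≃ₗ[F] V₂, ∀ (w : W) (v : V₁), e (ρ₁ w v) = ρ₂ w (e v)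

/-- The wedge product `v 0 ∧ v 1 ∧ ⋯ ∧ v (d-1)` as an element of `⋀^d V`. -/
noncomputable def wedge (d : ℕ) (v : Fin d → V) : ⋀[F]^d V :=
  ⟨ExteriorAlgebra.ιMulti F d v, ExteriorAlgebra.ιMulti_range F d ⟨v, rfl⟩⟩

/-- Let `ρ : W → GL(V)` be a finite-dimensional irreducible
representation, with `s 1, …, s k ∈ W` acting as generalized reflections with reflection
vectors `α i`, and `W` generated by the `s i`. Assume `s i · α j ≠ α j ↔ s j · α i ≠ α i`
for all `i, j`, and form the graph on `{1, …, k}` with edges `{i, j}` whenever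
`s i · α j ≠ α j` (`i ≠ j`). Then this graph is connected. -/
theorem reflection_graph_connected
    [FiniteDimensional F V] (ρ : Representation F W V)
    {k : ℕ} (hk : 0 < k) (s : Fin k → W) (α : Fin k → V)
    (hrefl : ∀ i, IsReflection (ρ (s i)))
    (hα : ∀ i, α i ≠ 0)
    (hαmem : ∀ i, α i ∈ LinearMap.range (ρ (s i) - LinearMap.id))
    (hgen : Subgroup.closure (Set.range s) = ⊤)
    (hirr : ρ.IsIrreducible')
    (hsym : ∀ i j, ρ (s i) (α j) ≠ α j ↔ ρ (s j) (α i) ≠ α i) :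
    (SimpleGraph.mk (fun i j : Fin k => i ≠ j ∧ ρ (s i) (α j) ≠ α j)
      ⟨fun i j h => ⟨h.1.symm, (hsym i j).mp h.2⟩⟩
      ⟨fun i h => h.1 rfl⟩).Connected := by
  set G : SimpleGraph (Fin k) :=
    SimpleGraph.mk (fun i j : Fin k => i ≠ j ∧ ρ (s i) (α j) ≠ α j)
      ⟨fun i j h => ⟨h.1.symm, (hsym i j).mp h.2⟩⟩
      ⟨fun i h => h.1 rfl⟩ with hG
  have hAdj : ∀ i j, G.Adj i j ↔ (i ≠ j ∧ ρ (s i) (α j) ≠ α j) := fun i j => Iff.rfl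
  have hrange : ∀ i, LinearMap.range (ρ (s i) - LinearMap.id) = Submodule.span F {α i} := by
    intro i
    refine (Submodule.eq_of_le_of_finrank_eq ?_ ?_).symm
    · rw [Submodule.span_le, Set.singleton_subset_iff]; exact hαmem i
    · rw [finrank_span_singleton (hα i), (hrefl i).2]
  rw [SimpleGraph.connected_iff]
  refine ⟨?_, ⟨⟨0, hk⟩⟩⟩
  intro i₀ j₀
  by_contra hreach
  set A : Set (Fin k) := {j | G.Reachable i₀ j} with hA
  set U : Submodule F V := Submodule.span F (α '' A) with hU
  have hi₀ : i₀ ∈ A := SimpleGraph.Reachable.refl i₀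
  have hαU : ∀ j ∈ A, α j ∈ U := fun j hj => Submodule.subset_span ⟨j, hj, rfl⟩
  have hstab : ∀ i, ∀ v ∈ U, ρ (s i) v ∈ U := by
    intro i v hv
    induction hv using Submodule.span_induction with
    | mem x hx =>
      obtain ⟨j, hj, rfl⟩ := hx
      have hmem : ρ (s i) (α j) - α j ∈ LinearMap.range (ρ (s i) - LinearMap.id) :=
        ⟨α j, by simp⟩
      rw [hrange i, Submodule.mem_span_singleton] at hmem
      obtain ⟨c, hc⟩ := hmem
      have heq : ρ (s i) (α j) = α j + c • α i := by rw [hc]; abel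
      by_cases hc0 : c = 0
      · rw [heq, hc0, zero_smul, add_zero]; exact hαU j hj
      · rw [heq]
        refine Submodule.add_mem _ (hαU j hj) (Submodule.smul_mem _ _ ?_)
        by_cases hij : i = j
        · subst hij; exact hαU i hj
        · have hne : ρ (s i) (α j) ≠ α j := by
            rw [heq]
            intro h
            have h2 : c • α i = 0 := by
              have := congrArg (fun z => z - α j) h
              simpa using this
            rcases smul_eq_zero.mp h2 with h3 | h3
            · exact hc0 h3
            · exact hα i h3
          have hadj : G.Adj i j := ⟨hij, hne⟩
          exact hαU i (hj.trans hadj.symm.reachable)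
    | zero => simp
    | add x y hx hy ihx ihy => rw [map_add]; exact Submodule.add_mem _ ihx ihy
    | smul a x hx ih => rw [map_smul]; exact Submodule.smul_mem _ _ ih
  have hstabinv : ∀ i, ∀ v ∈ U, ρ (s i)⁻¹ v ∈ U := by
    intro i v hv
    have hcomp1 : (ρ (s i)) ∘ₗ (ρ ((s i)⁻¹)) = LinearMap.id := by
      ext x
      show (ρ (s i) * ρ ((s i)⁻¹)) x = x
      rw [← map_mul, mul_inv_cancel, map_one]; rfl
    have hcomp2 : (ρ ((s i)⁻¹)) ∘ₗ (ρ (s i)) = LinearMap.id := by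
      ext x
      show (ρ ((s i)⁻¹) * ρ (s i)) x = x
      rw [← map_mul, inv_mul_cancel, map_one]; rfl
    let e : V ≃ₗ[F] V := LinearEquiv.ofLinear (ρ (s i)) (ρ ((s i)⁻¹)) hcomp1 hcomp2
    have hle : Submodule.map (e : V →ₗ[F] V) U ≤ U := by
      rintro - ⟨u, hu, rfl⟩
      exact hstab i u hu
    have heq : Submodule.map (e : V →ₗ[F] V) U = U :=
      Submodule.eq_of_le_of_finrank_eq hle (LinearEquiv.finrank_map_eq e U)
    have hv' : v ∈ Submodule.map (e : V →ₗ[F] V) U := heq.symm ▸ hv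
    obtain ⟨u, hu, hue⟩ := hv'
    have : ρ ((s i)⁻¹) v = u := by
      rw [← hue]
      show (ρ ((s i)⁻¹) ∘ₗ ρ (s i)) u = u
      rw [hcomp2]; rfl
    rwa [this]
  have hinv : ∀ w : W, ∀ v ∈ U, ρ w v ∈ U := by
    have key : ∀ w ∈ Subgroup.closure (Set.range s),
        (∀ v ∈ U, ρ w v ∈ U) ∧ (∀ v ∈ U, ρ w⁻¹ v ∈ U) := by
      intro w hw
      induction hw using Subgroup.closure_induction with
      | mem x hx =>
        obtain ⟨j, rfl⟩ := hx
        exact ⟨hstab j, hstabinv j⟩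
      | one => simp
      | mul x y hx hy ihx ihy =>
        constructor
        · intro v hv
          rw [map_mul]
          exact ihx.1 _ (ihy.1 v hv)
        · intro v hv
          rw [mul_inv_rev, map_mul]
          exact ihy.2 _ (ihx.2 v hv)
      | inv x hx ih => exact ⟨ih.2, by simpa using ih.1⟩
    intro w v hv
    exact (key w (by rw [hgen]; trivial)).1 v hv
  have hUtop : U = ⊤ := by
    rcases hirr.2 U hinv with h | h
    · exfalso
      have := hαU i₀ hi₀
      rw [h, Submodule.mem_bot] at this
      exact hα i₀ this
    · exact h
  have hfix : ∀ j ∈ A, ρ (s j₀) (α j) = α j := by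
    intro j hj
    by_contra hne
    have hjne : j ≠ j₀ := by
      rintro rfl
      exact hreach hj
    have hadj : G.Adj j j₀ := ⟨hjne, (hsym j₀ j).mp hne⟩
    exact hreach (hj.trans hadj.reachable)
  have hfixall : ∀ v ∈ U, ρ (s j₀) v = v := by
    intro v hv
    induction hv using Submodule.span_induction with
    | mem x hx =>
      obtain ⟨j, hj, rfl⟩ := hx
      exact hfix j hj
    | zero => simp
    | add x y hx hy ihx ihy => rw [map_add, ihx, ihy]
    | smul a x hx ih => rw [map_smul, ih]
  have hbot : LinearMap.range (ρ (s j₀) - LinearMap.id) = ⊥ := by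
    rw [LinearMap.range_eq_bot]
    ext x
    have : x ∈ U := hUtop.symm ▸ Submodule.mem_top
    simp [LinearMap.sub_apply, hfixall x this]
  have h1 := (hrefl j₀).2
  rw [hbot] at h1
  simp at h1
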